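/- Let Λ̃ = ⋃_{k∈ℕ} (2^{-k}ℕ ∩ [k, k+1)) and let 0 < p < 1. If Λ is obtained from Λ̃ by keeping each element independently with probability p, then almost surely: for every L ∈ ℕ there exists N ∈ ℕ such that for all real x ≥ N, #(Λ ∩ [x, x + 2^{-L})) > p · 2^{J - L - 2}, where J = ⌊x⌋. -/

import Mathlib

open MeasureTheory Filter ProbabilityTheory Set
open scoped ENNReal

/-- `Λ̃ = ⋃_k (2^{-k}ℕ ∩ [k, k+1))`. -/
def tildeLambda0 : Set ℝ :=
  ⋃ k : ℕ, {x : ℝ | (∃ j : ℕ, x = (j : ℝ) / 2 ^ k) ∧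
    (k : ℝ) ≤ x ∧ x < (k : ℝ) + 1}

noncomputable section DensityAux

namespace DensityAux

/-- grid point `j / 2^J`. -/
def gp (J j : ℕ) : ℝ := (j : ℝ) / 2 ^ J

lemma gp_inj (J : ℕ) : Function.Injective (gp J) := by
  intro a b h
  have : (a : ℝ) = b := by
    have h2 : (0:ℝ) < 2 ^ J := by positivity
    unfold gp at h
    rw [div_left_inj' (ne_of_gt h2)] at h
    exact_mod_cast h
  exact_mod_cast this

lemma gp_mem {J j : ℕ} (h1 : J * 2 ^ J ≤ j) (h2 : j < (J + 1) * 2 ^ J) :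
    gp J j ∈ tildeLambda0 := by
  refine Set.mem_iUnion.2 ⟨J, ⟨⟨j, rfl⟩, ?_, ?_⟩⟩
  · rw [gp, le_div_iff₀ (by positivity)]
    exact_mod_cast h1
  · rw [gp, div_lt_iff₀ (by positivity)]
    have : (j : ℝ) < ((J + 1) * 2 ^ J : ℕ) := by exact_mod_cast h2
    push_cast at this ⊢
    linarith

/-- index block: with `J = L+1+t`, the `2^t` indices starting at `J·2^J + m·2^t`
(truncated to stay below `(J+1)·2^J`). -/
def blk (L t m : ℕ) : Finset ℕ :=
  Finset.Ico ((L+1+t) * 2^(L+1+t) + m * 2^t)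
    (min ((L+1+t+1) * 2^(L+1+t)) ((L+1+t) * 2^(L+1+t) + (m+1) * 2^t))

lemma blk_lower {L t m j : ℕ} (hj : j ∈ blk L t m) : (L+1+t) * 2^(L+1+t) ≤ j :=
  le_trans (Nat.le_add_right _ _) (Finset.mem_Ico.1 hj).1

lemma blk_upper {L t m j : ℕ} (hj : j ∈ blk L t m) : j < (L+1+t+1) * 2^(L+1+t) :=
  lt_of_lt_of_le (Finset.mem_Ico.1 hj).2 (min_le_left _ _)

lemma blk_mem_tilde {L t m j : ℕ} (hj : j ∈ blk L t m) : gp (L+1+t) j ∈ tildeLambda0 :=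
  gp_mem (blk_lower hj) (blk_upper hj)

lemma blk_card {L t m : ℕ} (hm : m < 2^(L+1)) : (blk L t m).card = 2^t := by
  have h : (L+1+t) * 2^(L+1+t) + (m+1) * 2^t ≤ (L+1+t+1) * 2^(L+1+t) := by
    have h1 : (m+1) * 2^t ≤ 2^(L+1) * 2^t := Nat.mul_le_mul_right _ hm
    rw [← pow_add] at h1
    have h2 : (L+1+t+1) * 2^(L+1+t) = (L+1+t) * 2^(L+1+t) + 2^(L+1+t) := by ring
    have h3 : (m+1) * 2^t = m * 2^t + 2^t := by ring
    omega
  rw [blk, min_eq_right h, Nat.card_Ico, Nat.add_sub_add_left, Nat.succ_mul,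
    Nat.add_sub_cancel_left]

/-- the block as a finset of elements of `tildeLambda0`. -/
def blkS (L t m : ℕ) : Finset ↥tildeLambda0 :=
  (blk L t m).attach.image (fun j => ⟨gp (L+1+t) j.1, blk_mem_tilde j.2⟩)

lemma blkS_card {L t m : ℕ} (hm : m < 2^(L+1)) : (blkS L t m).card = 2^t := by
  rw [blkS, Finset.card_image_of_injective, Finset.card_attach, blk_card hm]
  intro a b h
  exact Subtype.ext (gp_inj _ (congrArg Subtype.val h))

lemma mem_blkS {L t m : ℕ} {i : ↥tildeLambda0} :
    i ∈ blkS L t m ↔ ∃ j ∈ blk L t m, (i : ℝ) = gp (L+1+t) j := by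
  constructor
  · intro hi
    obtain ⟨j, _, hji⟩ := Finset.mem_image.1 hi
    exact ⟨j.1, j.2, by rw [← hji]⟩
  · rintro ⟨j, hj, hval⟩
    exact Finset.mem_image.2 ⟨⟨j, hj⟩, Finset.mem_attach _ _, Subtype.ext hval.symm⟩

lemma comp_fin (k : ℕ) :
    {x : ℝ | (∃ j : ℕ, x = (j:ℝ)/2^k) ∧ (k:ℝ) ≤ x ∧ x < (k:ℝ)+1}.Finite := by
  apply Set.Finite.subset ((Set.finite_lt_nat ((k+1)*2^k)).image (fun j : ℕ => (j:ℝ)/2^k))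
  rintro x ⟨⟨j, rfl⟩, _, hx2⟩
  refine ⟨j, ?_, rfl⟩
  simp only [Set.mem_setOf_eq]
  rw [div_lt_iff₀ (by positivity)] at hx2
  have h : (j:ℝ) < (((k+1)*2^k : ℕ) : ℝ) := by push_cast; linarith
  exact_mod_cast h

lemma tilde_fin (b : ℝ) : (tildeLambda0 ∩ Set.Iio b).Finite := by
  apply Set.Finite.subset (Set.Finite.biUnion (Set.finite_lt_nat ⌈b⌉₊) (fun k _ => comp_fin k))
  rintro x ⟨hx, hxb⟩
  obtain ⟨k, hk⟩ := Set.mem_iUnion.1 hx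
  have hkx : (k:ℝ) ≤ x := hk.2.1
  exact Set.mem_biUnion (Nat.lt_ceil.2 (lt_of_le_of_lt hkx hxb)) hk

lemma zpow_key (L t : ℕ) : (2:ℝ)^(-(L:ℤ)-1) * 2^(L+1+t) = 2^t := by
  have h1 : (2:ℝ)^(-(L:ℤ)-1) = ((2:ℝ)^(L+1))⁻¹ := by
    rw [← zpow_natCast (2:ℝ) (L+1), ← zpow_neg]
    congr 1
    push_cast
    ring
  rw [h1, pow_add 2 (L+1) t]
  field_simp

lemma gp_lower {L t m j : ℕ} (hj : j ∈ blk L t m) :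
    ((L:ℝ)+1+t) + m * (2:ℝ)^(-(L:ℤ)-1) ≤ gp (L+1+t) j := by
  have h : ((L+1+t) * 2^(L+1+t) + m*2^t : ℕ) ≤ j := (Finset.mem_Ico.1 hj).1
  have hc : (((L+1+t) * 2^(L+1+t) + m*2^t : ℕ) : ℝ) ≤ (j:ℝ) := by exact_mod_cast h
  push_cast at hc
  rw [gp, le_div_iff₀ (by positivity)]
  calc (((L:ℝ)+1+t) + m * (2:ℝ)^(-(L:ℤ)-1)) * 2^(L+1+t)
      = ((L:ℝ)+1+t)*2^(L+1+t) + m * ((2:ℝ)^(-(L:ℤ)-1) * 2^(L+1+t)) := by ring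
    _ = ((L:ℝ)+1+t)*2^(L+1+t) + m * 2^t := by rw [zpow_key]
    _ ≤ j := by linarith

lemma gp_upper {L t m j : ℕ} (hj : j ∈ blk L t m) :
    gp (L+1+t) j < ((L:ℝ)+1+t) + (m+1) * (2:ℝ)^(-(L:ℤ)-1) := by
  have h : j < (L+1+t) * 2^(L+1+t) + (m+1)*2^t :=
    lt_of_lt_of_le (Finset.mem_Ico.1 hj).2 (min_le_right _ _)
  have hc : (j:ℝ) < (((L+1+t) * 2^(L+1+t) + (m+1)*2^t : ℕ) : ℝ) := by exact_mod_cast h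
  push_cast at hc
  rw [gp, div_lt_iff₀ (by positivity)]
  calc (j:ℝ) < ((L:ℝ)+1+t)*2^(L+1+t) + ((m:ℝ)+1) * 2^t := by linarith
    _ = ((L:ℝ)+1+t)*2^(L+1+t) + ((m:ℝ)+1) * ((2:ℝ)^(-(L:ℤ)-1) * 2^(L+1+t)) := by
        rw [zpow_key]
    _ = (((L:ℝ)+1+t) + ((m:ℝ)+1) * (2:ℝ)^(-(L:ℤ)-1)) * 2^(L+1+t) := by ring

lemma two_e (L : ℕ) : (2:ℝ)^(-(L:ℤ)) = 2^(-(L:ℤ)-1) * 2 := by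
  rw [← zpow_add_one₀ (by norm_num : (2:ℝ) ≠ 0)]
  norm_num

lemma caseA {L t m : ℕ} {x : ℝ} (hx1 : ((L:ℝ)+1+t) ≤ x)
    (hm : m = ⌈(x - ((L:ℝ)+1+t)) * 2^(L+1)⌉₊) {j : ℕ} (hj : j ∈ blk L t m) :
    gp (L+1+t) j ∈ Set.Ico x (x + (2:ℝ)^(-(L:ℤ))) := by
  set J : ℝ := (L:ℝ)+1+t with hJ
  set e : ℝ := (2:ℝ)^(-(L:ℤ)-1) with he
  have hepos : 0 < e := by positivity
  have hkey : (2:ℝ)^(L+1) * e = 1 := by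
    have := zpow_key L 0
    rw [pow_zero] at this
    rw [he, mul_comm]
    rw [show L+1+0 = L+1 from rfl] at this
    exact this
  have harg0 : 0 ≤ (x - J) * 2^(L+1) := by
    apply mul_nonneg (by linarith) (by positivity)
  constructor
  · -- x ≤ gp
    have h1 := gp_lower hj
    have h2 : (x - J) * 2^(L+1) ≤ (m:ℝ) := hm ▸ Nat.le_ceil _
    have h3 : (x - J) * 2^(L+1) * e ≤ (m:ℝ) * e :=
      mul_le_mul_of_nonneg_right h2 hepos.le
    have h4 : (x - J) * (2^(L+1) * e) = x - J := by rw [hkey]; ring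
    nlinarith
  · -- gp < x + 2^{-L}
    have h1 := gp_upper hj
    have h2 : (m:ℝ) < (x - J) * 2^(L+1) + 1 := hm ▸ Nat.ceil_lt_add_one harg0
    have h3 : ((m:ℝ)+1) * e < ((x - J) * 2^(L+1) + 2) * e := by
      apply mul_lt_mul_of_pos_right _ hepos
      linarith
    have h4 : ((x - J) * 2^(L+1) + 2) * e = (x - J) + 2 * e := by
      rw [add_mul]
      rw [show (x-J) * 2^(L+1) * e = (x-J) * (2^(L+1)*e) from by ring, hkey]
      ring
    rw [two_e]
    nlinarith

lemma caseB {L t : ℕ} {x : ℝ} (hx1 : ((L:ℝ)+1+t) ≤ x) (hx2 : x < ((L:ℝ)+1+t)+1)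
    (hm : ¬ ⌈(x - ((L:ℝ)+1+t)) * 2^(L+1)⌉₊ < 2^(L+1)) {j : ℕ} (hj : j ∈ blk L (t+1) 0) :
    gp (L+1+(t+1)) j ∈ Set.Ico x (x + (2:ℝ)^(-(L:ℤ))) := by
  set J : ℝ := (L:ℝ)+1+t with hJ
  set e : ℝ := (2:ℝ)^(-(L:ℤ)-1) with he
  have hepos : 0 < e := by positivity
  have hkey : (2:ℝ)^(L+1) * e = 1 := by
    have := zpow_key L 0
    rw [pow_zero] at this
    rw [he, mul_comm]
    rw [show L+1+0 = L+1 from rfl] at this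
    exact this
  have ha : ((2^(L+1) - 1 : ℕ) : ℝ) < (x - J) * 2^(L+1) := by
    by_contra hc
    push_neg at hc
    exact hm (lt_of_le_of_lt (Nat.ceil_le.2 hc)
      (Nat.sub_lt (by positivity) one_pos))
  have hacast : (2:ℝ)^(L+1) - 1 < (x - J) * 2^(L+1) := by
    have h1 : ((2^(L+1) - 1 : ℕ) : ℝ) = (2:ℝ)^(L+1) - 1 := by
      have : (1:ℕ) ≤ 2^(L+1) := Nat.one_le_two_pow
      push_cast [this]
      ring
    rwa [h1] at ha
  -- x > J + 1 - e
  have hxlow : J + 1 - e < x := by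
    have h2 : ((2:ℝ)^(L+1) - 1) * e < (x - J) * 2^(L+1) * e :=
      mul_lt_mul_of_pos_right hacast hepos
    have h3 : ((2:ℝ)^(L+1) - 1) * e = 1 - e := by
      rw [sub_mul, hkey]
      ring
    have h4 : (x - J) * 2^(L+1) * e = x - J := by
      rw [show (x-J) * 2^(L+1) * e = (x-J) * (2^(L+1)*e) from by ring, hkey]
      ring
    rw [h3, h4] at h2
    linarith
  have hlow := gp_lower (L:=L) (t:=t+1) (m:=0) hj
  have hup := gp_upper (L:=L) (t:=t+1) (m:=0) hj
  push_cast at hlow hup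
  constructor
  · -- x ≤ gp : gp ≥ J + 1 and x < J + 1
    linarith
  · rw [two_e]
    linarith

section Prob

variable {Ω : Type*} [MeasurableSpace Ω] (P : Measure Ω) [IsProbabilityMeasure P]
  (X : ↥tildeLambda0 → Ω → Bool)

/-- indicator variable -/
def Z (i : ↥tildeLambda0) (ω : Ω) : ℝ := if X i ω then 1 else 0

/-- the number of retained elements in the block -/
def S (L t m : ℕ) : Ω → ℝ := ∑ i ∈ blkS L t m, Z X i

lemma S_apply (L t m : ℕ) (ω : Ω) : S X L t m ω = ∑ i ∈ blkS L t m, Z X i ω := by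
  rw [S, Finset.sum_apply]

variable {P X}

lemma Z_eq (i : ↥tildeLambda0) :
    Z X i = Set.indicator {ω | X i ω = true} (1 : Ω → ℝ) := by
  funext ω
  simp only [Z, Set.indicator, Set.mem_setOf_eq, Pi.one_apply]

lemma Z_meas (hXm : ∀ i, Measurable (X i)) (i : ↥tildeLambda0) : Measurable (Z X i) := by
  have : Z X i = (fun b : Bool => if b then (1:ℝ) else 0) ∘ X i := rfl
  rw [this]
  exact measurable_from_top.comp (hXm i)

lemma Z_memLp (hXm : ∀ i, Measurable (X i)) (i : ↥tildeLambda0) : MemLp (Z X i) 2 P := by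
  refine MemLp.of_bound ((Z_meas hXm i).aestronglyMeasurable) 1 ?_
  filter_upwards with ω
  simp only [Z]
  split <;> simp

lemma Z_sq (i : ↥tildeLambda0) : (Z X i) ^ 2 = Z X i := by
  funext ω
  simp only [Pi.pow_apply, Z]
  split <;> simp

lemma Z_integral {p : ℝ} (hp : 0 ≤ p) (hXm : ∀ i, Measurable (X i))
    (hX : ∀ i, P {ω | X i ω = true} = ENNReal.ofReal p) (i : ↥tildeLambda0) :
    P[Z X i] = p := by
  have hs : MeasurableSet {ω | X i ω = true} := hXm i (measurableSet_singleton true)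
  rw [Z_eq, integral_indicator_one hs, measureReal_def, hX i, ENNReal.toReal_ofReal hp]

lemma Z_variance {p : ℝ} (hp : 0 ≤ p) (hXm : ∀ i, Measurable (X i))
    (hX : ∀ i, P {ω | X i ω = true} = ENNReal.ofReal p) (i : ↥tildeLambda0) :
    variance (Z X i) P = p - p ^ 2 := by
  rw [variance_eq_sub (Z_memLp hXm i), Z_sq, Z_integral hp hXm hX i]

lemma Z_indep (hXm : ∀ i, Measurable (X i))
    (hindep : iIndepFun X P) :
    Pairwise fun i j => IndepFun (Z X i) (Z X j) P := by
  intro i j hij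
  have h := ProbabilityTheory.iIndepFun.comp hindep
    (fun _ (b : Bool) => if b then (1:ℝ) else 0) (fun _ => measurable_from_top)
  exact h.indepFun hij

/-- The Chebyshev estimate for one block. -/
lemma meas_bad {p : ℝ} (hp : 0 < p) (hp1 : p < 1) (hXm : ∀ i, Measurable (X i))
    (hindep : iIndepFun X P)
    (hX : ∀ i, P {ω | X i ω = true} = ENNReal.ofReal p)
    (L t m : ℕ) (hm : m < 2^(L+1)) :
    P {ω | S X L t m ω ≤ p * 2^t / 2} ≤ ENNReal.ofReal (4 / (p * 2^t)) := by
  have hn : (0:ℝ) < 2^t := by positivity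
  have hnp : (0:ℝ) < p * 2^t := by positivity
  have hmem : ∀ i ∈ blkS L t m, MemLp (Z X i) 2 P := fun i _ => Z_memLp hXm i
  have hSmem : MemLp (S X L t m) 2 P := memLp_finset_sum' _ hmem
  have hES : P[S X L t m] = p * 2^t := by
    rw [S]
    simp only [Finset.sum_apply]
    rw [integral_finset_sum _ (fun i _ => (Z_memLp hXm i).integrable one_le_two)]
    have : ∀ i ∈ blkS L t m, P[Z X i] = p := fun i _ => Z_integral hp.le hXm hX i
    rw [Finset.sum_congr rfl this, Finset.sum_const, blkS_card hm, nsmul_eq_mul]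
    push_cast
    ring
  have hVS : variance (S X L t m) P = 2^t * (p - p^2) := by
    rw [S, IndepFun.variance_sum hmem ((Z_indep hXm hindep).set_pairwise _)]
    have : ∀ i ∈ blkS L t m, variance (Z X i) P = p - p^2 :=
      fun i _ => Z_variance hp.le hXm hX i
    rw [Finset.sum_congr rfl this, Finset.sum_const, blkS_card hm, nsmul_eq_mul]
    push_cast
    ring
  have hsub : {ω | S X L t m ω ≤ p * 2^t / 2} ⊆
      {ω | p * 2^t / 2 ≤ |S X L t m ω - P[S X L t m]|} := by
    intro ω hω
    simp only [Set.mem_setOf_eq] at hω ⊢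
    rw [hES, abs_sub_comm, le_abs]
    left
    linarith
  refine (measure_mono hsub).trans ((meas_ge_le_variance_div_sq hSmem
    (by positivity : (0:ℝ) < p * 2^t / 2)).trans ?_)
  apply ENNReal.ofReal_le_ofReal
  rw [hVS, div_le_div_iff₀ (by positivity) hnp]
  nlinarith [sq_nonneg (2^t : ℝ), hn, hp, hp1, mul_pos hn hn]

variable (X) in
/-- the bad event at scale `L`, level `t` -/
def BadSet (p : ℝ) (L t : ℕ) : Set Ω :=
  ⋃ m ∈ Finset.range (2^(L+1)), {ω | S X L t m ω ≤ p * 2^t / 2}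

lemma meas_BadSet {p : ℝ} (hp : 0 < p) (hp1 : p < 1) (hXm : ∀ i, Measurable (X i))
    (hindep : iIndepFun X P)
    (hX : ∀ i, P {ω | X i ω = true} = ENNReal.ofReal p) (L t : ℕ) :
    P (BadSet X p L t) ≤ (2^(L+1) : ℝ≥0∞) * ENNReal.ofReal (4 / (p * 2^t)) := by
  refine (measure_biUnion_finset_le _ _).trans ?_
  calc ∑ m ∈ Finset.range (2^(L+1)), P {ω | S X L t m ω ≤ p * 2^t / 2}
      ≤ ∑ _m ∈ Finset.range (2^(L+1)), ENNReal.ofReal (4 / (p * 2^t)) :=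
        Finset.sum_le_sum fun m hm =>
          meas_bad hp hp1 hXm hindep hX L t m (Finset.mem_range.1 hm)
    _ = (2^(L+1) : ℝ≥0∞) * ENNReal.ofReal (4 / (p * 2^t)) := by
        rw [Finset.sum_const, Finset.card_range, nsmul_eq_mul]
        push_cast
        ring

lemma tsum_BadSet {p : ℝ} (hp : 0 < p) (hp1 : p < 1) (hXm : ∀ i, Measurable (X i))
    (hindep : iIndepFun X P)
    (hX : ∀ i, P {ω | X i ω = true} = ENNReal.ofReal p) (L : ℕ) :
    (∑' t, P (BadSet X p L t)) ≠ ∞ := by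
  have hb : ∀ t : ℕ, P (BadSet X p L t) ≤
      ENNReal.ofReal ((2^(L+1) * (4 / p)) * (1/2 : ℝ)^t) := by
    intro t
    refine (meas_BadSet hp hp1 hXm hindep hX L t).trans ?_
    have h1 : ((2:ℝ≥0∞)^(L+1)) = ENNReal.ofReal ((2:ℝ)^(L+1)) := by
      rw [ENNReal.ofReal_pow (by norm_num)]
      norm_num
    rw [h1, ← ENNReal.ofReal_mul (by positivity)]
    apply ENNReal.ofReal_le_ofReal
    apply le_of_eq
    have h2 : ((2:ℝ)^t) ≠ 0 := by positivity
    field_simp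
    rw [← mul_pow]
    norm_num
  have hsum : Summable (fun t : ℕ => (2^(L+1) * (4 / p)) * (1/2 : ℝ)^t) :=
    (summable_geometric_of_lt_one (by norm_num) (by norm_num)).mul_left _
  have := ENNReal.tsum_le_tsum hb
  rw [← ENNReal.ofReal_tsum_of_nonneg (fun t => by positivity) hsum] at this
  exact (this.trans_lt ENNReal.ofReal_lt_top).ne

lemma ae_good {p : ℝ} (hp : 0 < p) (hp1 : p < 1) (hXm : ∀ i, Measurable (X i))
    (hindep : iIndepFun X P)
    (hX : ∀ i, P {ω | X i ω = true} = ENNReal.ofReal p) :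
    ∀ᵐ ω ∂P, ∀ L : ℕ, ∃ T : ℕ, ∀ t, T ≤ t → ∀ m, m < 2^(L+1) →
      p * 2^t / 2 < S X L t m ω := by
  rw [ae_all_iff]
  intro L
  filter_upwards [ae_eventually_notMem (tsum_BadSet hp hp1 hXm hindep hX L)] with ω hω
  rw [Filter.eventually_atTop] at hω
  obtain ⟨T, hT⟩ := hω
  refine ⟨T, fun t ht m hm => ?_⟩
  have h2 := hT t ht
  rw [BadSet] at h2
  simp only [Set.mem_iUnion, not_exists, Set.mem_setOf_eq, Finset.mem_range] at h2
  exact not_le.1 (h2 m hm)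

lemma card_lower (ω : Ω) (Lam : Ω → Set ℝ)
    (hLam : ∀ ω, Lam ω = {x : ℝ | ∃ h : x ∈ tildeLambda0, X ⟨x, h⟩ ω = true})
    {L t m : ℕ} {x : ℝ}
    (hsub : ∀ i ∈ blkS L t m, (i : ℝ) ∈ Set.Ico x (x + (2:ℝ)^(-(L:ℤ)))) :
    S X L t m ω ≤ (Nat.card ↥(Lam ω ∩ Set.Ico x (x + (2:ℝ)^(-(L:ℤ)))) : ℝ) := by
  classical
  set T := Lam ω ∩ Set.Ico x (x + (2:ℝ)^(-(L:ℤ))) with hT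
  have hfin : T.Finite := by
    apply (tilde_fin (x + (2:ℝ)^(-(L:ℤ)))).subset
    rintro y ⟨hy1, hy2⟩
    refine ⟨?_, hy2.2⟩
    rw [hLam] at hy1
    exact hy1.1
  set F := (blkS L t m).filter (fun i => X i ω = true) with hF
  have hSF : S X L t m ω = F.card := by
    rw [S_apply]
    simp only [Z]
    rw [Finset.sum_boole]
  have himg : ↑(F.image (Subtype.val)) ⊆ T := by
    intro y hy
    simp only [Finset.coe_image, Set.mem_image, Finset.mem_coe, hF,
      Finset.mem_filter] at hy
    obtain ⟨i, ⟨hiblk, hiX⟩, rfl⟩ := hy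
    refine ⟨?_, hsub i hiblk⟩
    rw [hLam]
    exact ⟨i.2, hiX⟩
  have hcard : (F.image (Subtype.val)).card ≤ Nat.card T := by
    rw [Nat.card_coe_set_eq]
    calc (F.image Subtype.val).card
        = (↑(F.image Subtype.val) : Set ℝ).ncard := (Set.ncard_coe_finset _).symm
      _ ≤ T.ncard := Set.ncard_le_ncard himg hfin
  have hFimg : (F.image Subtype.val).card = F.card :=
    Finset.card_image_of_injective _ Subtype.val_injective
  rw [hSF]
  exact_mod_cast hFimg ▸ hcard

end Prob

end DensityAux

end DensityAux

open DensityAux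

/-- Density lemma: if `Λ` is obtained from `Λ̃` by keeping each element
independently with probability `p`, then almost surely, for every `L` there is
`N` such that for all `x ≥ N`, `#(Λ ∩ [x, x+2^{-L})) > p·2^{⌊x⌋-L-2}`. -/
theorem density_lemma
    {Ω : Type*} [MeasurableSpace Ω] (P : Measure Ω) [IsProbabilityMeasure P]
    (p : ℝ) (hp : 0 < p) (hp1 : p < 1)
    (X : ↥tildeLambda0 → Ω → Bool) (hXm : ∀ i, Measurable (X i))
    (hindep : iIndepFun X P)
    (hX : ∀ i, P {ω | X i ω = true} = ENNReal.ofReal p)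
    (Lam : Ω → Set ℝ)
    (hLam : ∀ ω, Lam ω = {x : ℝ | ∃ h : x ∈ tildeLambda0, X ⟨x, h⟩ ω = true}) :
    ∀ᵐ ω ∂P, ∀ L : ℕ, ∃ N : ℕ, ∀ x : ℝ, (N : ℝ) ≤ x →
      (Nat.card ↥(Lam ω ∩ Set.Ico x (x + (2:ℝ) ^ (-(L:ℤ)))) : ℝ) >
        p * (2:ℝ) ^ (⌊x⌋ - (L:ℤ) - 2) := by
  filter_upwards [ae_good hp hp1 hXm hindep hX] with ω hω
  intro L
  obtain ⟨T, hT⟩ := hω L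
  refine ⟨T + L + 2, fun x hx => ?_⟩
  have hx0 : (0:ℝ) ≤ x := le_trans (by positivity) hx
  have hJz0 : 0 ≤ ⌊x⌋ := Int.floor_nonneg.2 hx0
  have hJge : T + L + 2 ≤ ⌊x⌋.toNat := by
    have h1 : ((T+L+2 : ℕ) : ℤ) ≤ ⌊x⌋ := Int.le_floor.2 (by exact_mod_cast hx)
    omega
  obtain ⟨t, ht, hJeq⟩ : ∃ t, T+1 ≤ t ∧ ⌊x⌋.toNat = L+1+t :=
    ⟨⌊x⌋.toNat - L - 1, by omega, by omega⟩
  have hfloor : ⌊x⌋ = ((L+1+t : ℕ) : ℤ) := by omega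
  have hexp : (⌊x⌋ - (L:ℤ) - 2) = (t:ℤ) - 1 := by rw [hfloor]; push_cast; ring
  rw [hexp]
  have hthr : p * (2:ℝ)^((t:ℤ)-1) = p * 2^t / 2 := by
    rw [zpow_sub₀ (by norm_num : (2:ℝ) ≠ 0), zpow_natCast, zpow_one]
    ring
  rw [hthr]
  have hxJ' : ((L:ℝ)+1+t) ≤ x := by
    have h := Int.floor_le x
    rw [hfloor] at h
    push_cast at h
    linarith
  have hxJ1' : x < ((L:ℝ)+1+t)+1 := by
    have h := Int.lt_floor_add_one x
    rw [hfloor] at h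
    push_cast at h
    linarith
  by_cases hcase : ⌈(x - ((L:ℝ)+1+t)) * 2^(L+1)⌉₊ < 2^(L+1)
  · set m := ⌈(x - ((L:ℝ)+1+t)) * 2^(L+1)⌉₊ with hmdef
    have hS := hT t (by omega) m hcase
    have hsub : ∀ i ∈ blkS L t m, (i : ℝ) ∈ Set.Ico x (x + (2:ℝ)^(-(L:ℤ))) := by
      intro i hi
      obtain ⟨j, hj, hval⟩ := mem_blkS.1 hi
      rw [hval]
      exact caseA hxJ' hmdef hj
    have hcount := card_lower ω Lam hLam hsub
    linarith
  · have hS := hT (t+1) (by omega) 0 (by positivity)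
    have hsub : ∀ i ∈ blkS L (t+1) 0, (i : ℝ) ∈ Set.Ico x (x + (2:ℝ)^(-(L:ℤ))) := by
      intro i hi
      obtain ⟨j, hj, hval⟩ := mem_blkS.1 hi
      rw [hval]
      exact caseB hxJ' hxJ1' hcase hj
    have hcount := card_lower ω Lam hLam hsub
    have h2 : p * 2^(t+1) / 2 = p * 2^t := by ring
    have h3 : 0 < p * 2^t := by positivity
    rw [h2] at hS
    linarith
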